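/- Let R be a commutative ring and let T be the free R-module spanned by (isomorphism classes of) finite rooted trees. Define a bilinear grafting product on T by t ◁ s := the sum, over all vertices v of t, of the rooted tree obtained from the disjoint union of t and s by adding an edge from the root of s to v (keeping the root of t as root). Then ◁ satisfies the (right) pre-Lie identity (t ◁ s) ◁ u − t ◁ (s ◁ u) = (t ◁ u) ◁ s − t ◁ (u ◁ s); hence (T, ◁) is a pre-Lie algebra. -/

import Mathlib

/-!
STATEMENT 1: The free `R`-module spanned by isomorphism classes of finite rooted
trees, equipped with the grafting product `t ◁ s` (the sum over all vertices `v`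
of `t` of the tree obtained by attaching the root of `s` to `v` by a new edge),
satisfies the (right) pre-Lie identity
`(t ◁ s) ◁ u − t ◁ (s ◁ u) = (t ◁ u) ◁ s − t ◁ (u ◁ s)`.

Encoding: `PTree` is the type of finite *planar* rooted trees (`leaf` is the
one-vertex tree, `graft c t` adds `c` as a new first child of the root of `t`).
Isomorphism classes of finite rooted trees are classes of the relation
`TreeIso` (generated by congruence, transposition of adjacent children of the
root, and transitivity), so the free module on isomorphism classes is the
quotient of `PTree →₀ R` by the span of the differences `single t 1 − single t' 1`
for `TreeIso t t'`.  The pre-Lie identity is stated as the assertion that the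
associator difference lies in that span, i.e. it vanishes in the free module on
isomorphism classes of rooted trees.
-/

/-- Finite planar rooted trees: `leaf` is the one-vertex tree and `graft c t`
is the tree `t` with an extra child `c` attached to its root (as first child). -/
inductive PTree : Type
  | leaf : PTree
  | graft : PTree → PTree → PTree

/-- Isomorphism of rooted trees (equality up to reordering of children at each
vertex): generated by congruence, transposition of adjacent children of the
root, and transitivity. -/
inductive TreeIso : PTree → PTree → Prop
  | leaf : TreeIso .leaf .leaf
  | graft {c c' t t' : PTree} : TreeIso c c' → TreeIso t t' →
      TreeIso (.graft c t) (.graft c' t')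
  | swap (c₁ c₂ t : PTree) :
      TreeIso (.graft c₁ (.graft c₂ t)) (.graft c₂ (.graft c₁ t))
  | trans {a b c : PTree} : TreeIso a b → TreeIso b c → TreeIso a c

/-- The list of all trees obtained by grafting the root of `s` onto one of the
vertices of `t` by a new edge (one entry for each vertex of `t`). -/
def graftList : PTree → PTree → List PTree
  | .leaf, s => [.graft s .leaf]
  | .graft c t, s =>
      ((graftList c s).map fun c' => .graft c' t) ++
      ((graftList t s).map fun t' => .graft c t')

/-- Every tree is isomorphic to itself. -/
theorem TreeIso.rfl : ∀ t : PTree, TreeIso t t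
  | .leaf => .leaf
  | .graft c t => .graft (TreeIso.rfl c) (TreeIso.rfl t)

/-- The list of all trees obtained from `t` by grafting `s` at a vertex `v`
and `u` at a vertex `v'`, one entry for every ordered pair `(v, v')` of
vertices of `t`. -/
def graft2List : PTree → PTree → PTree → List PTree
  | .leaf, s, u => [.graft s (.graft u .leaf)]
  | .graft c t, s, u =>
      ((graft2List c s u).map fun c' => .graft c' t) ++
      ((graft2List t s u).map fun t' => .graft c t') ++
      ((graftList c s).flatMap fun w => (graftList t u).map fun w' => .graft w w') ++
      ((graftList c u).flatMap fun w => (graftList t s).map fun w' => .graft w w')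

theorem sum_map_add {α M : Type*} [AddCommMonoid M] (l : List α) (f g : α → M) :
    (l.map fun a => f a + g a).sum = (l.map f).sum + (l.map g).sum := by
  induction l with
  | nil => simp
  | cons a l ih => simp [ih]; abel

theorem sum_map_swap {α β M : Type*} [AddCommMonoid M] (l₁ : List α) (l₂ : List β)
    (f : α → β → M) :
    (l₁.map fun a => (l₂.map (f a)).sum).sum
      = (l₂.map fun b => (l₁.map fun a => f a b).sum).sum := by
  induction l₁ with
  | nil => simp
  | cons a l ih => simp [ih, sum_map_add]

noncomputable section

variable (R : Type*) [CommRing R]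

/-- The sum of the basis vectors indexed by the entries of a list of trees. -/
noncomputable def Sl (l : List PTree) : PTree →₀ R :=
  (l.map fun w => Finsupp.single w (1 : R)).sum

theorem Sl_append (a b : List PTree) : Sl R (a ++ b) = Sl R a + Sl R b := by
  simp [Sl]

theorem Sl_map (f : PTree → PTree) (l : List PTree) :
    Sl R (l.map f) = Finsupp.lmapDomain R R f (Sl R l) := by
  induction l with
  | nil => simp [Sl]
  | cons a l ih => simp [Sl, map_add, Finsupp.mapDomain_single] at ih ⊢; simp [ih]

theorem Sl_flatMap {α : Type*} (l : List α) (g : α → List PTree) :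
    Sl R (l.flatMap g) = (l.map fun a => Sl R (g a)).sum := by
  induction l with
  | nil => simp [Sl]
  | cons a l ih => simp [Sl_append, ih]

theorem sum_map_linear {α : Type*} {M N : Type*} [AddCommMonoid M] [AddCommMonoid N]
    [Module R M] [Module R N] (f : M →ₗ[R] N) (h : α → M) (l : List α) :
    (l.map fun a => f (h a)).sum = f (l.map h).sum := by
  rw [map_list_sum, List.map_map]; rfl

/-- Grafting of basis elements: the sum over all vertices of `t` of the tree
obtained by grafting `s` at that vertex. -/
noncomputable def graftSum (t s : PTree) : PTree →₀ R :=
  ((graftList t s).map fun u => Finsupp.single u (1 : R)).sum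

/-- The bilinear extension of grafting to the free `R`-module on rooted trees. -/
noncomputable def graftMul : (PTree →₀ R) →ₗ[R] (PTree →₀ R) →ₗ[R] (PTree →₀ R) :=
  Finsupp.lsum R fun t => LinearMap.toSpanSingleton R _
    (Finsupp.lsum R fun s =>
      LinearMap.toSpanSingleton R (PTree →₀ R) (graftSum R t s))

/-- The submodule identifying isomorphic rooted trees; the quotient by it is
the free `R`-module on isomorphism classes of finite rooted trees. -/
noncomputable def isoRel : Submodule R (PTree →₀ R) :=
  Submodule.span R {d : PTree →₀ R |
    ∃ t t' : PTree, TreeIso t t' ∧ d = Finsupp.single t 1 - Finsupp.single t' 1}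

/-- Key exact (planar) identity: grafting `s` everywhere on `t` and then `u`
everywhere on the results equals the double-grafting sum plus grafting the
trees `s ◁ u` everywhere on `t`. -/
theorem key1 (s u : PTree) : ∀ t : PTree,
    ((graftList t s).map fun w => Sl R (graftList w u)).sum
      = Sl R (graft2List t s u)
        + ((graftList s u).map fun w => Sl R (graftList t w)).sum
  | .leaf => by
      simp only [graftList, graft2List, List.map_cons, List.map_nil, List.sum_cons,
        List.sum_nil, add_zero, List.map_map]
      rw [Sl_append]
      simp [Sl, List.map_map, Function.comp_def]
      abel
  | .graft c t => by
      have ihc := key1 s u c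
      have iht := key1 s u t
      simp only [graftList, graft2List, List.map_append, List.sum_append,
        List.map_map, Function.comp_def]
      -- expand the inner graftLists
      simp only [Sl_append, sum_map_add]
      -- turn maps by `graft · t` and `graft c ·` into linear maps
      simp only [Sl_map, Sl_flatMap]
      rw [sum_map_linear R (Finsupp.lmapDomain R R fun c' => PTree.graft c' t)
          (fun w => Sl R (graftList w u)),
        sum_map_linear R (Finsupp.lmapDomain R R fun t' => PTree.graft c t')
          (fun w => Sl R (graftList w u)),
        ihc, iht,
        sum_map_linear R (Finsupp.lmapDomain R R fun c' => PTree.graft c' t)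
          (fun w => Sl R (graftList c w)),
        sum_map_linear R (Finsupp.lmapDomain R R fun t' => PTree.graft c t')
          (fun w => Sl R (graftList t w))]
      simp only [map_add, map_list_sum, List.map_map, Function.comp_def]
      rw [show ((graftList t s).map fun a =>
            (Finsupp.lmapDomain R R fun c' => PTree.graft c' a) (Sl R (graftList c u))).sum
          = ((graftList c u).map fun a =>
            (Finsupp.lmapDomain R R fun w' => PTree.graft a w') (Sl R (graftList t s))).sum by
        simp only [← Sl_map]
        simp only [Sl, List.map_map, Function.comp_def]
        exact sum_map_swap _ _ fun a b => Finsupp.single (PTree.graft b a) (1 : R)]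
      abel

theorem isoRel_map (f : PTree → PTree) (hf : ∀ a b, TreeIso a b → TreeIso (f a) (f b))
    {x : PTree →₀ R} (hx : x ∈ isoRel R) :
    Finsupp.lmapDomain R R f x ∈ isoRel R := by
  induction hx using Submodule.span_induction with
  | mem d hd =>
      obtain ⟨t, t', h, rfl⟩ := hd
      apply Submodule.subset_span
      exact ⟨f t, f t', hf _ _ h, by
        simp [map_sub, Finsupp.mapDomain_single]⟩
  | zero => simp [zero_mem]
  | add a b _ _ ha hb => rw [map_add]; exact add_mem ha hb
  | smul r a _ ha => rw [map_smul]; exact Submodule.smul_mem _ _ ha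

/-- The double-grafting sum is symmetric in `s` and `u` up to isomorphism. -/
theorem key2 : ∀ t s u : PTree,
    Sl R (graft2List t s u) - Sl R (graft2List t u s) ∈ isoRel R
  | .leaf, s, u => by
      apply Submodule.subset_span
      refine ⟨.graft s (.graft u .leaf), .graft u (.graft s .leaf),
        TreeIso.swap s u .leaf, ?_⟩
      simp [Sl, graft2List]
  | .graft c t, s, u => by
      have h1 := isoRel_map R (fun c' => PTree.graft c' t)
        (fun a b h => TreeIso.graft h (TreeIso.rfl t)) (key2 c s u)
      have h2 := isoRel_map R (PTree.graft c)
        (fun a b h => TreeIso.graft (TreeIso.rfl c) h) (key2 t s u)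
      have h := add_mem h1 h2
      convert h using 1
      simp only [graft2List, Sl_append, Sl_map, map_sub]
      abel

theorem graftMul_single_single (t s : PTree) :
    graftMul R (Finsupp.single t 1) (Finsupp.single s 1) = graftSum R t s := by
  simp [graftMul, Finsupp.lsum_single, LinearMap.toSpanSingleton_apply]

theorem graftSum_eq (t s : PTree) : graftSum R t s = Sl R (graftList t s) := rfl

/-- The pre-Lie identity on basis trees, as membership in `isoRel`. -/
theorem E_mem (t s u : PTree) :
    graftMul R (graftMul R (Finsupp.single t 1) (Finsupp.single s 1)) (Finsupp.single u 1)
      - graftMul R (Finsupp.single t 1) (graftMul R (Finsupp.single s 1) (Finsupp.single u 1))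
      - (graftMul R (graftMul R (Finsupp.single t 1) (Finsupp.single u 1)) (Finsupp.single s 1)
        - graftMul R (Finsupp.single t 1)
            (graftMul R (Finsupp.single u 1) (Finsupp.single s 1)))
      ∈ isoRel R := by
  have expand : ∀ a b : PTree,
      graftMul R (graftSum R a b) (Finsupp.single u 1)
        = ((graftList a b).map fun w => Sl R (graftList w u)).sum ∧ True := by
    intro a b; exact ⟨by
      rw [graftSum_eq]
      have : graftMul R (Sl R (graftList a b)) (Finsupp.single u 1)
          = ((graftMul R).flip (Finsupp.single u 1)) (Sl R (graftList a b)) := rfl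
      rw [this, Sl]
      rw [← sum_map_linear R ((graftMul R).flip (Finsupp.single u 1))
        (fun w => Finsupp.single w (1 : R))]
      simp only [LinearMap.flip_apply, graftMul_single_single, graftSum_eq], trivial⟩
  have outer : ∀ a b c : PTree,
      graftMul R (graftMul R (Finsupp.single a 1) (Finsupp.single b 1)) (Finsupp.single c 1)
        = ((graftList a b).map fun w => Sl R (graftList w c)).sum := by
    intro a b c
    rw [graftMul_single_single, graftSum_eq]
    have : graftMul R (Sl R (graftList a b)) (Finsupp.single c 1)
        = ((graftMul R).flip (Finsupp.single c 1)) (Sl R (graftList a b)) := rfl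
    rw [this, Sl, ← sum_map_linear R ((graftMul R).flip (Finsupp.single c 1))
      (fun w => Finsupp.single w (1 : R))]
    simp only [LinearMap.flip_apply, graftMul_single_single, graftSum_eq]
  have inner : ∀ a b c : PTree,
      graftMul R (Finsupp.single a 1) (graftMul R (Finsupp.single b 1) (Finsupp.single c 1))
        = ((graftList b c).map fun w => Sl R (graftList a w)).sum := by
    intro a b c
    rw [graftMul_single_single, graftSum_eq, Sl,
      ← sum_map_linear R (graftMul R (Finsupp.single a 1))
        (fun w => Finsupp.single w (1 : R))]
    simp only [graftMul_single_single, graftSum_eq]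
  rw [outer t s u, outer t u s, inner t s u, inner t u s, key1 R s u t, key1 R u s t]
  have := key2 R t s u
  convert this using 1
  abel

/-- Grafting of rooted trees satisfies the (right) pre-Lie identity in the free
module on isomorphism classes of finite rooted trees. -/
theorem graft_preLie (x y z : PTree →₀ R) :
    graftMul R (graftMul R x y) z - graftMul R x (graftMul R y z)
      - (graftMul R (graftMul R x z) y - graftMul R x (graftMul R z y))
      ∈ isoRel R := by
  induction x using Finsupp.induction_linear with
  | zero => simp only [map_zero, LinearMap.zero_apply, sub_zero, sub_self]; exact zero_mem (isoRel R)
  | add f g hf hg =>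
      have h := add_mem hf hg
      convert h using 1
      simp only [map_add, LinearMap.add_apply]
      abel
  | single t r =>
    induction y using Finsupp.induction_linear with
    | zero => simp only [map_zero, LinearMap.zero_apply, sub_zero, sub_self]; exact zero_mem (isoRel R)
    | add f g hf hg =>
        have h := add_mem hf hg
        convert h using 1
        simp only [map_add, LinearMap.add_apply]
        abel
    | single s r' =>
      induction z using Finsupp.induction_linear with
      | zero => simp only [map_zero, LinearMap.zero_apply, sub_zero, sub_self]; exact zero_mem (isoRel R)
      | add f g hf hg =>
          have h := add_mem hf hg
          convert h using 1
          simp only [map_add, LinearMap.add_apply]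
          abel
      | single u r'' =>
          have hsm : ∀ (a : PTree) (c : R),
              Finsupp.single a c = c • Finsupp.single a (1 : R) := by
            intro a c; rw [Finsupp.smul_single, smul_eq_mul, mul_one]
          rw [hsm t r, hsm s r', hsm u r'']
          have h := Submodule.smul_mem (isoRel R) (r * r' * r'') (E_mem R t s u)
          convert h using 1
          simp only [map_smul, LinearMap.smul_apply, smul_smul, smul_sub]
          ring_nf

end
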